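/- Let R be a commutative ring and S a saturated regular multiplicative subset of R (every element of S is a non-zerodivisor). If R_S is a finitely presented flat R-module, then S satisfies the maximal multiple condition, i.e., there exists t ∈ S such that s | t for all s ∈ S. -/

import Mathlib

/-- If `S` is a saturated regular multiplicative subset of `R` and the
localization `R_S` is a finitely presented flat `R`-module, then `S` satisfies the
maximal multiple condition. -/
theorem stmt1 {R : Type*} [CommRing R] (S : Submonoid R)
    (hreg : ∀ s ∈ S, s ∈ nonZeroDivisors R)
    (hsat : ∀ a b : R, a * b ∈ S → a ∈ S ∧ b ∈ S)
    (hfp : Module.FinitePresentation R (Localization S))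
    (hflat : Module.Flat R (Localization S)) :
    ∃ t ∈ S, ∀ s ∈ S, s ∣ t := by
  classical
  have hfin : Module.Finite R (Localization S) := inferInstance
  obtain ⟨G, hG⟩ := hfin.fg_top
  choose a den hden using fun g : Localization S =>
    (by obtain ⟨⟨r, m⟩, h⟩ := IsLocalization.mk'_surjective S g; exact ⟨r, m, h⟩ :
      ∃ (r : R) (m : S), IsLocalization.mk' (Localization S) r m = g)
  set t : R := ∏ g ∈ G, (den g : R) with ht
  have htS : t ∈ S := Submonoid.prod_mem S (fun g _ => (den g).2)
  refine ⟨t, htS, fun s hs => ?_⟩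
  have key : ∀ x : Localization S, ∃ r : R,
      (algebraMap R (Localization S)) t * x = algebraMap R (Localization S) r := by
    intro x
    have hx : x ∈ Submodule.span R (G : Set (Localization S)) := by
      rw [hG]; trivial
    induction hx using Submodule.span_induction with
    | mem g hg =>
      set p : R := ∏ h ∈ G.erase g, (den h : R) with hp
      have htp : t = (den g : R) * p :=
        (Finset.mul_prod_erase G (fun h => ((den h : R))) hg).symm
      have h2 : algebraMap R (Localization S) ((den g : S) : R) * g
          = algebraMap R (Localization S) (a g) := by
        nth_rewrite 2 [← hden g]
        exact IsLocalization.mk'_spec' (Localization S) (a g) (den g)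
      refine ⟨p * a g, ?_⟩
      rw [htp, map_mul, map_mul, mul_assoc, mul_comm
        (algebraMap R (Localization S) p) g, ← mul_assoc, h2, mul_comm]
    | zero => exact ⟨0, by simp⟩
    | add x y _ _ hx hy =>
      obtain ⟨r1, h1⟩ := hx; obtain ⟨r2, h2⟩ := hy
      exact ⟨r1 + r2, by rw [mul_add, h1, h2, map_add]⟩
    | smul c x _ hx =>
      obtain ⟨r, h⟩ := hx
      exact ⟨c * r, by rw [Algebra.smul_def, map_mul, mul_left_comm, h]⟩
  obtain ⟨r, hr⟩ := key (IsLocalization.mk' (Localization S) 1 ⟨s, hs⟩)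
  refine ⟨r, ?_⟩
  have hinj : Function.Injective (algebraMap R (Localization S)) :=
    IsLocalization.injective (Localization S) (fun x hx => hreg x hx)
  apply hinj
  rw [map_mul, ← hr, mul_left_comm]
  rw [show algebraMap R (Localization S) s *
    IsLocalization.mk' (Localization S) (1:R) (⟨s, hs⟩ : S) = 1 by
      have := IsLocalization.mk'_spec' (Localization S) (1:R) (⟨s, hs⟩ : S)
      rw [map_one] at this; exact this, mul_one]
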